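/- arXiv:2503.13114 — 3 statements merged into one kernel-verified Lean document; each statement's English description precedes it below -/
import Mathlib

section
/- If a noise channel N(ρ) = Σ_j N_j ρ N_j† has Kraus operators satisfying Σ_i Π_i N_j Π_i ∝ I for every j, where {Π_i} is a complete family of orthogonal projectors (Σ_i Π_i = I, Π_i Π_j = δ_ij Π_i), and U is a unitary commuting with every Π_i, then the map ρ ↦ Σ_{i,j} Π_i (N∘U)(Π_i ρ Π_j) Π_j is proportional to the unitary channel ρ ↦ U ρ U†. -/
open Matrix BigOperators

noncomputable section

/-- If the Kraus operators of a noise channel satisfy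
`∑ i, Π i * N j * Π i ∝ 1` for every `j`, and `U` is a unitary commuting with each
projector of a complete orthogonal family, then
`ρ ↦ ∑ i j, Π i * (N ∘ U)(Π i ρ Π j) * Π j` is proportional to `ρ ↦ U ρ U†`. -/
theorem scv_detection {d M J : ℕ}
    (P : Fin M → Matrix (Fin d) (Fin d) ℂ)
    (hherm : ∀ i, (P i)ᴴ = P i)
    (hproj : ∀ i, P i * P i = P i)
    (horth : ∀ i j, i ≠ j → P i * P j = 0)
    (hcomplete : ∑ i, P i = 1)
    (K : Fin J → Matrix (Fin d) (Fin d) ℂ)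
    (hKraus : ∑ j, (K j)ᴴ * K j = 1)
    (U : Matrix (Fin d) (Fin d) ℂ)
    (hU : Uᴴ * U = 1) (hU' : U * Uᴴ = 1)
    (hUcomm : ∀ i, U * P i = P i * U)
    (hsym : ∀ j, ∃ c : ℂ, ∑ i, P i * K j * P i = c • (1 : Matrix (Fin d) (Fin d) ℂ)) :
    ∃ c : ℂ, ∀ ρ : Matrix (Fin d) (Fin d) ℂ,
      ∑ i, ∑ j, P i * (∑ k, K k * (U * (P i * ρ * P j) * Uᴴ) * (K k)ᴴ) * P j
        = c • (U * ρ * Uᴴ) := by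
  choose c hc using hsym
  refine ⟨∑ k, c k * (starRingEnd ℂ) (c k), fun ρ => ?_⟩
  have hU2 : ∀ i, Uᴴ * P i = P i * Uᴴ := by
    intro i
    have := congrArg conjTranspose (hUcomm i)
    simpa [conjTranspose_mul, hherm] using this.symm
  have hc' : ∀ k, ∑ i, P i * (K k)ᴴ * P i = (starRingEnd ℂ) (c k) • (1 : Matrix (Fin d) (Fin d) ℂ) := by
    intro k
    have := congrArg conjTranspose (hc k)
    simpa [Matrix.conjTranspose_sum, conjTranspose_mul, hherm, Matrix.conjTranspose_smul, mul_assoc] using this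
  have key : ∀ k (i j : Fin M),
      P i * (K k * (U * (P i * ρ * P j) * Uᴴ) * (K k)ᴴ) * P j
        = (P i * K k * P i) * (U * ρ * Uᴴ) * (P j * (K k)ᴴ * P j) := by
    intro k i j
    have h1 : U * (P i * (ρ * (P j * (Uᴴ * ((K k)ᴴ * P j)))))
        = P i * (U * (ρ * (P j * (Uᴴ * ((K k)ᴴ * P j))))) := by
      rw [← mul_assoc, hUcomm, mul_assoc]
    have h2 : P j * (Uᴴ * ((K k)ᴴ * P j)) = Uᴴ * (P j * ((K k)ᴴ * P j)) := by
      rw [← mul_assoc, ← hU2, mul_assoc]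
    simp only [mul_assoc]
    rw [h1, h2]
  have main : ∀ k,
      ∑ i, ∑ j, P i * (K k * (U * (P i * ρ * P j) * Uᴴ) * (K k)ᴴ) * P j
        = (c k * (starRingEnd ℂ) (c k)) • (U * ρ * Uᴴ) := by
    intro k
    calc ∑ i, ∑ j, P i * (K k * (U * (P i * ρ * P j) * Uᴴ) * (K k)ᴴ) * P j
        = ∑ i, ∑ j, (P i * K k * P i) * (U * ρ * Uᴴ) * (P j * (K k)ᴴ * P j) := by
          simp only [key]
      _ = (∑ i, P i * K k * P i) * (U * ρ * Uᴴ) * (∑ j, P j * (K k)ᴴ * P j) := by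
          rw [Finset.sum_mul, Finset.sum_mul]
          exact Finset.sum_congr rfl fun i _ => (Finset.mul_sum _ _ _).symm
      _ = (c k * (starRingEnd ℂ) (c k)) • (U * ρ * Uᴴ) := by
          rw [hc k, hc' k]
          simp [Matrix.smul_mul, Matrix.mul_smul, smul_smul, mul_comm]
  calc ∑ i, ∑ j, P i * (∑ k, K k * (U * (P i * ρ * P j) * Uᴴ) * (K k)ᴴ) * P j
      = ∑ k, ∑ i, ∑ j, P i * (K k * (U * (P i * ρ * P j) * Uᴴ) * (K k)ᴴ) * P j := by
        simp only [Finset.mul_sum, Finset.sum_mul]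
        have h : ∀ i : Fin M, ∑ j, ∑ k, P i * (K k * (U * (P i * ρ * P j) * Uᴴ) * (K k)ᴴ) * P j
            = ∑ k, ∑ j, P i * (K k * (U * (P i * ρ * P j) * Uᴴ) * (K k)ᴴ) * P j :=
          fun i => Finset.sum_comm
        simp only [h]
        exact Finset.sum_comm
    _ = ∑ k, (c k * (starRingEnd ℂ) (c k)) • (U * ρ * Uᴴ) := by
        exact Finset.sum_congr rfl fun k _ => main k
    _ = (∑ k, c k * (starRingEnd ℂ) (c k)) • (U * ρ * Uᴴ) := by
        rw [Finset.sum_smul]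
end
end

section
/- Let U be an n-qubit unitary, Q_U the group generated (up to phase) by the Pauli operators appearing with nonzero coefficient in the Pauli expansion of U, and Q_U^com the set of Pauli operators commuting with U. Then a Pauli operator P satisfies P ∉ Q_U if and only if there exists Q ∈ Q_U^com with PQ ≠ QP. -/
open Matrix BigOperators

noncomputable section

set_option linter.unusedVariables false
set_option linter.unnecessarySeqFocus false
set_option linter.unreachableTactic false
set_option linter.unusedTactic false

/-- The four single-qubit Pauli matrices `I, X, Y, Z`. -/
def pauliMat : Fin 4 → Matrix (Fin 2) (Fin 2) ℂ :=
  ![1, !![0, 1; 1, 0], !![0, -Complex.I; Complex.I, 0], !![1, 0; 0, -1]]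

/-- The `n`-qubit Pauli operator given by a choice of single-qubit Pauli on each
tensor factor (entrywise Kronecker product). -/
def PauliOp (n : ℕ) (f : Fin n → Fin 4) :
    Matrix (Fin n → Fin 2) (Fin n → Fin 2) ℂ :=
  fun v w => ∏ i, pauliMat (f i) (v i) (w i)

def pmul : Fin 4 → Fin 4 → Fin 4 :=
  ![![0,1,2,3], ![1,0,3,2], ![2,3,0,1], ![3,2,1,0]]

def pph : Fin 4 → Fin 4 → ℂ :=
  ![![1,1,1,1], ![1,1,Complex.I,-Complex.I], ![1,-Complex.I,1,Complex.I], ![1,Complex.I,-Complex.I,1]]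

def xbit : Fin 4 → ZMod 2 := ![0,1,1,0]
def zbit : Fin 4 → ZMod 2 := ![0,0,1,1]
def psymp (a b : Fin 4) : ZMod 2 := xbit a * zbit b + zbit a * xbit b

lemma pauliMat_mul (a b : Fin 4) :
    pauliMat a * pauliMat b = pph a b • pauliMat (pmul a b) := by
  fin_cases a <;> fin_cases b <;>
    · ext i j
      fin_cases i <;> fin_cases j <;>
        simp [pauliMat, pmul, pph, Matrix.mul_apply, Fin.sum_univ_two, Matrix.one_apply,
          Matrix.vecHead, Matrix.vecTail, Complex.ext_iff]

lemma pph_ne_zero (a b : Fin 4) : pph a b ≠ 0 := by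
  fin_cases a <;> fin_cases b <;>
    simp [pph, Matrix.vecHead, Matrix.vecTail, Complex.ext_iff]

lemma pph_self (a : Fin 4) : pph a a = 1 := by
  fin_cases a <;> simp [pph, Matrix.vecHead, Matrix.vecTail]

lemma pmul_self : ∀ a : Fin 4, pmul a a = 0 := by decide
lemma pmul_eq_zero_iff : ∀ a b : Fin 4, pmul a b = 0 ↔ a = b := by decide
lemma pmul_comm : ∀ a b : Fin 4, pmul a b = pmul b a := by decide
lemma xbit_pmul : ∀ a b : Fin 4, xbit (pmul a b) = xbit a + xbit b := by decide
lemma zbit_pmul : ∀ a b : Fin 4, zbit (pmul a b) = zbit a + zbit b := by decide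

def sgn (t : ZMod 2) : ℂ := if t = 0 then 1 else -1

lemma pph_comm (a b : Fin 4) :
    pph a b = sgn (psymp a b) * pph b a := by
  fin_cases a <;> fin_cases b <;>
    simp +decide [pph, psymp, sgn, xbit, zbit, Matrix.vecHead, Matrix.vecTail, Complex.ext_iff]

lemma pauliMat_trace (a : Fin 4) :
    (pauliMat a).trace = if a = 0 then 2 else 0 := by
  fin_cases a <;> simp [pauliMat, Matrix.trace, Fin.sum_univ_two, Matrix.vecHead, Matrix.vecTail]

lemma pauli_complete (i j k l : Fin 2) :
    ∑ a : Fin 4, pauliMat a i j * pauliMat a k l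
      = 2 * (if i = l then 1 else 0) * (if j = k then 1 else 0) := by
  fin_cases i <;> fin_cases j <;> fin_cases k <;> fin_cases l <;>
    simp [pauliMat, Fin.sum_univ_four, Matrix.vecHead, Matrix.vecTail] <;>
    ring_nf <;> simp [Complex.ext_iff]

variable {n : ℕ}

lemma sgn_add (s t : ZMod 2) : sgn (s + t) = sgn s * sgn t := by
  have h : ∀ u : ZMod 2, u = 0 ∨ u = 1 := by decide
  rcases h s with hs | hs <;> rcases h t with ht | ht <;>
    subst hs <;> subst ht <;> norm_num [sgn] <;> decide

lemma sgn_ne_zero (t : ZMod 2) : sgn t ≠ 0 := by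
  unfold sgn; split <;> norm_num

lemma sgn_sum {ι : Type*} (s : Finset ι) (h : ι → ZMod 2) :
    ∏ i ∈ s, sgn (h i) = sgn (∑ i ∈ s, h i) := by
  induction s using Finset.cons_induction with
  | empty => simp [sgn]
  | cons a s ha ih => rw [Finset.prod_cons, Finset.sum_cons, ih, ← sgn_add]

lemma PauliOp_mul (f g : Fin n → Fin 4) :
    PauliOp n f * PauliOp n g
      = (∏ i, pph (f i) (g i)) • PauliOp n (fun i => pmul (f i) (g i)) := by
  ext v w
  have step1 : (PauliOp n f * PauliOp n g) v w
      = ∏ i, ∑ x : Fin 2, pauliMat (f i) (v i) x * pauliMat (g i) x (w i) := by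
    rw [Finset.prod_univ_sum, Fintype.piFinset_univ]
    simp [Matrix.mul_apply, PauliOp, Finset.prod_mul_distrib]
  have key : ∀ i : Fin n, ∑ x : Fin 2, pauliMat (f i) (v i) x * pauliMat (g i) x (w i)
      = pph (f i) (g i) * pauliMat (pmul (f i) (g i)) (v i) (w i) := by
    intro i
    have h := congrFun (congrFun (pauliMat_mul (f i) (g i)) (v i)) (w i)
    simpa [Matrix.mul_apply, smul_eq_mul] using h
  rw [step1, Finset.prod_congr rfl fun i _ => key i, Finset.prod_mul_distrib]
  simp [PauliOp, smul_eq_mul]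

lemma PauliOp_zero : PauliOp n (fun _ => 0) = 1 := by
  ext v w
  show (∏ i, pauliMat 0 (v i) (w i)) = _
  have : ∀ i : Fin n, pauliMat 0 (v i) (w i) = if v i = w i then 1 else 0 := by
    intro i; simp [pauliMat, Matrix.one_apply]
  rw [Finset.prod_congr rfl fun i _ => this i, Finset.prod_boole, Matrix.one_apply]
  simp [funext_iff]

lemma PauliOp_sq (f : Fin n → Fin 4) : PauliOp n f * PauliOp n f = 1 := by
  rw [PauliOp_mul]
  simp [pph_self, pmul_self, PauliOp_zero]

def symp (f g : Fin n → Fin 4) : ZMod 2 := ∑ i, psymp (f i) (g i)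

lemma PauliOp_comm (f g : Fin n → Fin 4) :
    PauliOp n f * PauliOp n g = sgn (symp f g) • (PauliOp n g * PauliOp n f) := by
  rw [PauliOp_mul f g, PauliOp_mul g f]
  have h1 : (fun i => pmul (f i) (g i)) = fun i => pmul (g i) (f i) := by
    funext i; exact pmul_comm _ _
  have h2 : ∏ i, pph (f i) (g i) = sgn (symp f g) * ∏ i, pph (g i) (f i) := by
    rw [Finset.prod_congr rfl fun i _ => pph_comm (f i) (g i), Finset.prod_mul_distrib,
      sgn_sum]
    rfl
  rw [h1, h2, smul_smul]

lemma PauliOp_trace (f : Fin n → Fin 4) :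
    (PauliOp n f).trace = if f = (fun _ => 0) then (2 : ℂ) ^ n else 0 := by
  have : (PauliOp n f).trace = ∏ i, (pauliMat (f i)).trace := by
    simp only [Matrix.trace, Matrix.diag, PauliOp]
    rw [Finset.prod_univ_sum, Fintype.piFinset_univ]
  rw [this, Finset.prod_congr rfl fun i _ => pauliMat_trace (f i)]
  by_cases h : f = fun _ => 0
  · subst h; simp
  · rw [if_neg h]
    obtain ⟨i, hi⟩ : ∃ i, f i ≠ 0 := by
      by_contra hc
      push_neg at hc
      exact h (funext hc)
    exact Finset.prod_eq_zero (Finset.mem_univ i) (by simp [hi])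

lemma trace_PauliOp_mul (f g : Fin n → Fin 4) :
    (PauliOp n f * PauliOp n g).trace = if f = g then (2 : ℂ) ^ n else 0 := by
  rw [PauliOp_mul, Matrix.trace_smul, PauliOp_trace]
  by_cases h : f = g
  · subst h
    simp [pmul_self, pph_self]
  · have : ¬ (fun i => pmul (f i) (g i)) = (fun _ => 0) := by
      simp only [funext_iff]
      intro hall
      exact h (funext fun i => (pmul_eq_zero_iff _ _).1 (hall i))
    simp [this, h]

lemma pauli_sum_complete (a b v w : Fin n → Fin 2) :
    ∑ f : Fin n → Fin 4, PauliOp n f b a * PauliOp n f v w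
      = (2:ℂ)^n * (if a = v then 1 else 0) * (if b = w then 1 else 0) := by
  have h1 : ∀ f : Fin n → Fin 4, PauliOp n f b a * PauliOp n f v w
      = ∏ i, (pauliMat (f i) (b i) (a i) * pauliMat (f i) (v i) (w i)) := by
    intro f; simp [PauliOp, Finset.prod_mul_distrib]
  have h2 : ∏ i, (∑ x : Fin 4, pauliMat x (b i) (a i) * pauliMat x (v i) (w i))
      = ∑ f : Fin n → Fin 4, ∏ i, pauliMat (f i) (b i) (a i) * pauliMat (f i) (v i) (w i) := by
    rw [Finset.prod_univ_sum, Fintype.piFinset_univ]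
  rw [Finset.sum_congr rfl fun f _ => h1 f, ← h2,
    Finset.prod_congr rfl fun i _ => pauli_complete (b i) (a i) (v i) (w i),
    Finset.prod_mul_distrib, Finset.prod_mul_distrib, Finset.prod_boole, Finset.prod_boole]
  simp only [Finset.prod_const, Finset.card_univ, Fintype.card_fin, Finset.mem_univ,
    forall_true_left]
  have e1 : (∀ i, b i = w i) = (b = w) := by simp [funext_iff]
  have e2 : (∀ i, a i = v i) = (a = v) := by simp [funext_iff]
  simp only [e1, e2]
  ring

lemma pauli_expansion (U : Matrix (Fin n → Fin 2) (Fin n → Fin 2) ℂ) :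
    U = ∑ f : Fin n → Fin 4, ((U * PauliOp n f).trace / 2 ^ n) • PauliOp n f := by
  have h2n : (2:ℂ)^n ≠ 0 := pow_ne_zero _ two_ne_zero
  ext v w
  rw [Matrix.sum_apply]
  have key : ∑ f : Fin n → Fin 4, (U * PauliOp n f).trace * PauliOp n f v w
      = 2^n * U v w := by
    have h1 : ∀ f : Fin n → Fin 4, (U * PauliOp n f).trace * PauliOp n f v w
        = ∑ a, ∑ b, U a b * (PauliOp n f b a * PauliOp n f v w) := by
      intro f
      simp [Matrix.trace, Matrix.diag, Matrix.mul_apply, Finset.sum_mul, mul_assoc]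
    rw [Finset.sum_congr rfl fun f _ => h1 f, Finset.sum_comm]
    have h2 : ∀ a : Fin n → Fin 2,
        ∑ f : Fin n → Fin 4, ∑ b, U a b * (PauliOp n f b a * PauliOp n f v w)
          = ∑ b, U a b * ((2:ℂ)^n * (if a = v then 1 else 0) * (if b = w then 1 else 0)) := by
      intro a
      rw [Finset.sum_comm]
      exact Finset.sum_congr rfl fun b _ => by
        rw [← Finset.mul_sum, pauli_sum_complete]
    rw [Finset.sum_congr rfl fun a _ => h2 a]
    simp [mul_ite, ite_mul, Finset.sum_ite_eq', mul_comm]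
  have h3 : ∀ f : Fin n → Fin 4,
      (((U * PauliOp n f).trace / 2 ^ n) • PauliOp n f) v w
        = (U * PauliOp n f).trace * PauliOp n f v w / 2 ^ n := by
    intro f
    simp [Matrix.smul_apply, smul_eq_mul, div_mul_eq_mul_div]
  rw [Finset.sum_congr rfl fun f _ => h3 f, ← Finset.sum_div, key]
  field_simp

lemma trace_sum_mul (d : (Fin n → Fin 4) → ℂ) (h : Fin n → Fin 4) :
    ((∑ f : Fin n → Fin 4, d f • PauliOp n f) * PauliOp n h).trace = 2^n * d h := by
  rw [Finset.sum_mul, Matrix.trace_sum]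
  simp only [smul_mul_assoc, Matrix.trace_smul, trace_PauliOp_mul, smul_eq_mul]
  simp [Finset.sum_ite_eq', mul_comm]

lemma sgn_eq_one_iff (t : ZMod 2) : sgn t = 1 ↔ t = 0 := by
  constructor
  · intro h
    by_contra ht
    rw [sgn, if_neg ht] at h
    norm_num at h
  · intro h; simp [h, sgn]

lemma symp_comm (f g : Fin n → Fin 4) : symp f g = symp g f := by
  unfold symp psymp
  exact Finset.sum_congr rfl fun i _ => by ring

lemma psymp_comm (a b : Fin 4) : psymp a b = psymp b a := by unfold psymp; ring

-- equality from proportionality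
lemma PauliOp_propEq {f h : Fin n → Fin 4} {c : ℂ} (hfh : PauliOp n f = c • PauliOp n h) :
    f = h := by
  by_contra hne
  have h2 : (PauliOp n f * PauliOp n f).trace = ((c • PauliOp n h) * PauliOp n f).trace := by
    rw [← hfh]
  rw [trace_PauliOp_mul, if_pos rfl, smul_mul_assoc, Matrix.trace_smul, trace_PauliOp_mul,
    if_neg (show ¬h = f from fun hh => hne hh.symm), smul_zero] at h2
  exact pow_ne_zero n two_ne_zero h2

-- commutation criterion
lemma pauli_commute_iff (f g : Fin n → Fin 4) :
    PauliOp n f * PauliOp n g = PauliOp n g * PauliOp n f ↔ symp f g = 0 := by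
  constructor
  · intro h
    by_contra hs
    have hc := PauliOp_comm f g
    rw [h, sgn, if_neg hs] at hc
    have h0 : (2 : ℂ) • (PauliOp n g * PauliOp n f) = 0 := by
      have hadd : PauliOp n g * PauliOp n f + PauliOp n g * PauliOp n f = 0 := by
        nth_rewrite 1 [hc]
        simp
      rw [two_smul]
      exact hadd
    have hne : PauliOp n g * PauliOp n f ≠ 0 := by
      intro h0'
      have h1 : PauliOp n g * (PauliOp n g * PauliOp n f) * PauliOp n f = 1 := by
        rw [← mul_assoc, PauliOp_sq, one_mul, PauliOp_sq]
      rw [h0', mul_zero, zero_mul] at h1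
      exact one_ne_zero h1.symm
    rw [smul_eq_zero] at h0
    rcases h0 with h0 | h0
    · norm_num at h0
    · exact hne h0
  · intro h
    rw [PauliOp_comm f g, h]
    simp [sgn]

-- commuting with U
lemma commU_iff (U : Matrix (Fin n → Fin 2) (Fin n → Fin 2) ℂ) (g : Fin n → Fin 4) :
    U * PauliOp n g = PauliOp n g * U ↔
      ∀ h : Fin n → Fin 4, (U * PauliOp n h).trace ≠ 0 → symp h g = 0 := by
  set c : (Fin n → Fin 4) → ℂ := fun h => (U * PauliOp n h).trace / 2 ^ n with hc
  have h2n : (2:ℂ)^n ≠ 0 := pow_ne_zero _ two_ne_zero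
  have hcne : ∀ h, (U * PauliOp n h).trace ≠ 0 ↔ c h ≠ 0 := by
    intro h
    simp only [hc, ne_eq, div_eq_zero_iff, h2n, or_false]
  have hexp : U = ∑ h : Fin n → Fin 4, c h • PauliOp n h := pauli_expansion U
  constructor
  · intro hcomm h htr
    -- P_g U P_g = U and also = ∑ sgn(symp g h) c h P_h
    have key : U = ∑ h : Fin n → Fin 4, (sgn (symp g h) * c h) • PauliOp n h := by
      have h1 : PauliOp n g * U * PauliOp n g = U := by
        rw [← hcomm, mul_assoc, PauliOp_sq, mul_one]
      calc U = PauliOp n g * U * PauliOp n g := h1.symm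
        _ = ∑ h : Fin n → Fin 4, (sgn (symp g h) * c h) • PauliOp n h := by
            conv_lhs => rw [hexp]
            rw [Finset.mul_sum, Finset.sum_mul]
            refine Finset.sum_congr rfl fun h _ => ?_
            have h2 : PauliOp n g * PauliOp n h * PauliOp n g
                = sgn (symp g h) • PauliOp n h := by
              rw [PauliOp_comm g h, smul_mul_assoc, mul_assoc, PauliOp_sq, mul_one]
            calc PauliOp n g * (c h • PauliOp n h) * PauliOp n g
                = c h • (PauliOp n g * PauliOp n h * PauliOp n g) := by
                  rw [mul_smul_comm, smul_mul_assoc]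
              _ = (sgn (symp g h) * c h) • PauliOp n h := by
                  rw [h2, smul_smul, mul_comm]
    -- compare coefficients at h
    have t1 : (U * PauliOp n h).trace = 2^n * c h := by
      conv_lhs => rw [hexp]
      exact trace_sum_mul c h
    have t2 : (U * PauliOp n h).trace = 2^n * (sgn (symp g h) * c h) := by
      conv_lhs => rw [key]
      exact trace_sum_mul _ h
    have : c h = sgn (symp g h) * c h := by
      have := t1.symm.trans t2
      exact mul_left_cancel₀ h2n this
    have hch : c h ≠ 0 := (hcne h).1 htr
    have hsgn : sgn (symp g h) = 1 := by
      have h' : (sgn (symp g h) - 1) * c h = 0 := by linear_combination -this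
      rcases mul_eq_zero.1 h' with h'' | h''
      · exact sub_eq_zero.1 h''
      · exact absurd h'' hch
    rw [symp_comm]
    exact (sgn_eq_one_iff _).1 hsgn
  · intro hall
    conv_lhs => rw [hexp]
    conv_rhs => rw [hexp]
    rw [Finset.sum_mul, Finset.mul_sum]
    refine Finset.sum_congr rfl fun h _ => ?_
    rw [smul_mul_assoc, mul_smul_comm]
    by_cases hch : c h = 0
    · rw [hch]; simp
    · congr 1
      rw [pauli_commute_iff]
      exact hall h ((hcne h).2 hch)

-- encoding
def φv {n : ℕ} (f : Fin n → Fin 4) : Fin n → ZMod 2 × ZMod 2 := fun i => (xbit (f i), zbit (f i))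
def ψ1 : ZMod 2 × ZMod 2 → Fin 4 :=
  fun p => if p.1 = 0 then (if p.2 = 0 then 0 else 3) else (if p.2 = 0 then 1 else 2)
def ψv {n : ℕ} (u : Fin n → ZMod 2 × ZMod 2) : Fin n → Fin 4 := fun i => ψ1 (u i)

lemma psi_phi1 : ∀ a : Fin 4, ψ1 (xbit a, zbit a) = a := by decide
lemma phi_psi1 : ∀ p : ZMod 2 × ZMod 2, (xbit (ψ1 p), zbit (ψ1 p)) = p := by decide
lemma pmul_psi : ∀ (a : Fin 4) (p : ZMod 2 × ZMod 2),
    pmul a (ψ1 p) = ψ1 (xbit a + p.1, zbit a + p.2) := by decide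

lemma psi_phi {n : ℕ} (f : Fin n → Fin 4) : ψv (φv f) = f :=
  funext fun i => psi_phi1 (f i)
lemma phi_psi {n : ℕ} (u : Fin n → ZMod 2 × ZMod 2) : φv (ψv u) = u :=
  funext fun i => phi_psi1 (u i)

-- bilinear form
def Bform (n : ℕ) : LinearMap.BilinForm (ZMod 2) (Fin n → ZMod 2 × ZMod 2) :=
  LinearMap.mk₂ (ZMod 2)
    (fun u v => ∑ i, ((u i).1 * (v i).2 + (u i).2 * (v i).1))
    (fun u u' v => by
      rw [← Finset.sum_add_distrib]
      refine Finset.sum_congr rfl fun i _ => ?_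
      simp only [Pi.add_apply, Prod.fst_add, Prod.snd_add]
      ring)
    (fun c u v => by
      show (∑ i, (((c • u) i).1 * (v i).2 + ((c • u) i).2 * (v i).1))
          = c • ∑ i, ((u i).1 * (v i).2 + (u i).2 * (v i).1)
      rw [smul_eq_mul, Finset.mul_sum]
      refine Finset.sum_congr rfl fun i _ => ?_
      simp only [Pi.smul_apply, Prod.smul_fst, Prod.smul_snd, smul_eq_mul]
      ring)
    (fun u v v' => by
      rw [← Finset.sum_add_distrib]
      refine Finset.sum_congr rfl fun i _ => ?_
      simp only [Pi.add_apply, Prod.fst_add, Prod.snd_add]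
      ring)
    (fun c u v => by
      show (∑ i, ((u i).1 * ((c • v) i).2 + (u i).2 * ((c • v) i).1))
          = c • ∑ i, ((u i).1 * (v i).2 + (u i).2 * (v i).1)
      rw [smul_eq_mul, Finset.mul_sum]
      refine Finset.sum_congr rfl fun i _ => ?_
      simp only [Pi.smul_apply, Prod.smul_fst, Prod.smul_snd, smul_eq_mul]
      ring)

lemma Bform_apply {n : ℕ} (u v : Fin n → ZMod 2 × ZMod 2) :
    Bform n u v = ∑ i, ((u i).1 * (v i).2 + (u i).2 * (v i).1) := rfl

lemma Bform_comm {n : ℕ} (u v : Fin n → ZMod 2 × ZMod 2) : Bform n u v = Bform n v u := by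
  rw [Bform_apply, Bform_apply]
  exact Finset.sum_congr rfl fun i _ => by ring

lemma Bform_refl {n : ℕ} : (Bform n).IsRefl := fun u v h => by
  rw [Bform_comm]; exact h

lemma Bform_phi {n : ℕ} (f g : Fin n → Fin 4) : Bform n (φv f) (φv g) = symp f g := rfl

lemma Bform_nondeg {n : ℕ} : (Bform n).Nondegenerate := by
  refine (LinearMap.IsRefl.nondegenerate_iff_separatingLeft Bform_refl).2 ?_
  intro u hu
  funext i
  have key : ∀ p : ZMod 2 × ZMod 2,
      Bform n u (Pi.single i p) = (u i).1 * p.2 + (u i).2 * p.1 := by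
    intro p
    rw [Bform_apply]
    rw [Finset.sum_eq_single i]
    · rw [Pi.single_eq_same]
    · intro j _ hj
      rw [Pi.single_eq_of_ne hj]
      simp
    · intro h
      exact absurd (Finset.mem_univ i) h
  have h1 := hu (Pi.single i ((0 : ZMod 2), (1 : ZMod 2)))
  have h2 := hu (Pi.single i ((1 : ZMod 2), (0 : ZMod 2)))
  rw [key] at h1 h2
  simp only [mul_one, mul_zero, add_zero, zero_add] at h1 h2
  show u i = 0
  exact Prod.ext (by simpa using h1) (by simpa using h2)

variable {n : ℕ}

-- product of a list of Paulis
lemma list_prod_eq (l : List (Fin n → Fin 4)) :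
    ∃ c : ℂ, c ≠ 0 ∧ (l.map (PauliOp n)).prod = c • PauliOp n (ψv ((l.map φv).sum)) := by
  induction l with
  | nil =>
    refine ⟨1, one_ne_zero, ?_⟩
    have : ψv (0 : Fin n → ZMod 2 × ZMod 2) = fun _ => 0 := by
      funext i
      show ψ1 ((0 : Fin n → ZMod 2 × ZMod 2) i) = 0
      norm_num [ψ1]
    simp [this, PauliOp_zero]
  | cons g l ih =>
    obtain ⟨c, hc, he⟩ := ih
    refine ⟨(∏ i, pph (g i) (ψv ((l.map φv).sum) i)) * c, mul_ne_zero (Finset.prod_ne_zero_iff.2 fun i _ => pph_ne_zero _ _) hc, ?_⟩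
    rw [List.map_cons, List.prod_cons, he, mul_smul_comm, PauliOp_mul]
    have harg : (fun i => pmul (g i) (ψv ((l.map φv).sum) i)) = ψv ((φv g) + (l.map φv).sum) := by
      funext i
      show pmul (g i) (ψ1 ((l.map φv).sum i)) = ψ1 (((φv g) + (l.map φv).sum) i)
      rw [pmul_psi]
      rfl
    rw [harg, smul_smul, mul_comm,
      show φv g + (l.map φv).sum = ((g :: l).map φv).sum from by
        rw [List.map_cons, List.sum_cons]]

-- membership iff
lemma mem_iff (U : Matrix (Fin n → Fin 2) (Fin n → Fin 2) ℂ) (f : Fin n → Fin 4) :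
    (∃ (l : List (Fin n → Fin 4)) (c : ℂ),
        (∀ g ∈ l, (U * PauliOp n g).trace ≠ 0) ∧
        PauliOp n f = c • (l.map (PauliOp n)).prod)
    ↔ φv f ∈ Submodule.span (ZMod 2)
        (φv '' {h : Fin n → Fin 4 | (U * PauliOp n h).trace ≠ 0}) := by
  constructor
  · rintro ⟨l, c, hl, heq⟩
    obtain ⟨c', hc', he⟩ := list_prod_eq l
    rw [he, smul_smul] at heq
    have hf : f = ψv ((l.map φv).sum) := PauliOp_propEq heq
    have : φv f = (l.map φv).sum := by rw [hf, phi_psi]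
    rw [this]
    apply list_sum_mem
    intro x hx
    rw [List.mem_map] at hx
    obtain ⟨g, hg, rfl⟩ := hx
    exact Submodule.subset_span ⟨g, hl g hg, rfl⟩
  · intro hmem
    rw [Submodule.mem_span_set] at hmem
    obtain ⟨co, hsupp, hsum⟩ := hmem
    have h1 : ∑ a ∈ co.support, a = φv f := by
      rw [← hsum, Finsupp.sum]
      refine Finset.sum_congr rfl fun a ha => ?_
      have hco : co a = 1 := by
        have h0 := Finsupp.mem_support_iff.1 ha
        have hone : ∀ u : ZMod 2, u ≠ 0 → u = 1 := by decide
        exact hone _ h0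
      rw [hco, one_smul]
    set l : List (Fin n → Fin 4) := co.support.toList.map ψv with hl
    have hsum2 : (l.map φv).sum = φv f := by
      rw [hl, List.map_map]
      have : φv ∘ ψv = (id : (Fin n → ZMod 2 × ZMod 2) → _) := funext phi_psi
      rw [this, List.map_id]
      rw [← h1]
      have := Finset.sum_map_toList co.support (id : (Fin n → ZMod 2 × ZMod 2) → _)
      rw [List.map_id] at this
      exact this
    obtain ⟨c', hc', he⟩ := list_prod_eq l
    rw [hsum2, psi_phi] at he
    refine ⟨l, c'⁻¹, ?_, ?_⟩
    · intro g hg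
      rw [hl, List.mem_map] at hg
      obtain ⟨a, ha, rfl⟩ := hg
      have ha' : a ∈ (co.support : Set (Fin n → ZMod 2 × ZMod 2)) := by
        simpa using Finset.mem_toList.1 ha
      obtain ⟨h0, hh0, rfl⟩ := hsupp ha'
      rw [psi_phi]
      exact hh0
    · rw [he, smul_smul, inv_mul_cancel₀ hc', one_smul]

lemma not_mem_iff_exists_orth (W : Submodule (ZMod 2) (Fin n → ZMod 2 × ZMod 2))
    (x : Fin n → ZMod 2 × ZMod 2) :
    x ∉ W ↔ ∃ u ∈ (Bform n).orthogonal W, Bform n x u ≠ 0 := by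
  constructor
  · intro hx
    by_contra hcon
    push_neg at hcon
    apply hx
    rw [← LinearMap.BilinForm.orthogonal_orthogonal Bform_nondeg Bform_refl W,
      LinearMap.BilinForm.mem_orthogonal_iff]
    intro u hu
    show Bform n u x = 0
    rw [Bform_comm]
    exact hcon u hu
  · rintro ⟨u, hu, hg⟩ hxW
    exact hg ((LinearMap.BilinForm.mem_orthogonal_iff.1 hu) x hxW)

lemma rhs_iff (U : Matrix (Fin n → Fin 2) (Fin n → Fin 2) ℂ) (f : Fin n → Fin 4) :
    (∃ g : Fin n → Fin 4,
        U * PauliOp n g = PauliOp n g * U ∧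
        PauliOp n f * PauliOp n g ≠ PauliOp n g * PauliOp n f)
    ↔ ∃ u : Fin n → ZMod 2 × ZMod 2,
        u ∈ (Bform n).orthogonal (Submodule.span (ZMod 2)
          (φv '' {h : Fin n → Fin 4 | (U * PauliOp n h).trace ≠ 0}))
        ∧ Bform n (φv f) u ≠ 0 := by
  constructor
  · rintro ⟨g, hcomm, hanti⟩
    have hall := (commU_iff U g).1 hcomm
    refine ⟨φv g, ?_, ?_⟩
    · rw [LinearMap.BilinForm.mem_orthogonal_iff]
      intro u hu
      induction hu using Submodule.span_induction with
      | mem x hx =>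
        obtain ⟨h0, hh0, rfl⟩ := hx
        show Bform n (φv h0) (φv g) = 0
        rw [Bform_phi]
        exact hall h0 hh0
      | zero => simp [LinearMap.BilinForm.IsOrtho]
      | add x y _ _ ihx ihy =>
        show Bform n (x + y) (φv g) = 0
        rw [map_add, LinearMap.add_apply, ihx, ihy, add_zero]
      | smul c x _ ihx =>
        show Bform n (c • x) (φv g) = 0
        rw [_root_.map_smul, LinearMap.smul_apply, ihx, smul_zero]
    · rw [Bform_phi]
      intro h0
      exact hanti ((pauli_commute_iff f g).2 h0)
  · rintro ⟨u, hu, hg⟩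
    refine ⟨ψv u, ?_, ?_⟩
    · rw [commU_iff]
      intro h htr
      have hm : φv h ∈ Submodule.span (ZMod 2)
          (φv '' {h : Fin n → Fin 4 | (U * PauliOp n h).trace ≠ 0}) :=
        Submodule.subset_span ⟨h, htr, rfl⟩
      have := (LinearMap.BilinForm.mem_orthogonal_iff.1 hu) _ hm
      have h2 : Bform n (φv h) (φv (ψv u)) = 0 := by
        rw [phi_psi]
        exact this
      rw [Bform_phi] at h2
      exact h2
    · intro hcon
      have := (pauli_commute_iff f (ψv u)).1 hcon
      rw [← Bform_phi, phi_psi] at this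
      exact hg this

/-- For an `n`-qubit unitary `U`, a Pauli operator `P` is not in the
group `Q_U` generated (up to phase) by the Paulis appearing in the Pauli expansion
of `U` if and only if there is a Pauli operator commuting with `U` that
anticommutes (fails to commute) with `P`. -/
theorem not_mem_pauli_group_iff_exists_noncommuting {n : ℕ}
    (U : Matrix (Fin n → Fin 2) (Fin n → Fin 2) ℂ)
    (hU : Uᴴ * U = 1) (hU' : U * Uᴴ = 1)
    (f : Fin n → Fin 4) :
    (¬ ∃ (l : List (Fin n → Fin 4)) (c : ℂ),
        (∀ g ∈ l, (U * PauliOp n g).trace ≠ 0) ∧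
        PauliOp n f = c • (l.map (PauliOp n)).prod)
    ↔ ∃ g : Fin n → Fin 4,
        U * PauliOp n g = PauliOp n g * U ∧
        PauliOp n f * PauliOp n g ≠ PauliOp n g * PauliOp n f := by
  rw [mem_iff U f, rhs_iff U f]
  exact not_mem_iff_exists_orth _ _
end
end

section
/- Let ρ = (1/2)(I + xX + yY) with 0 ≤ y ≤ x, x² + y² ≤ 1, and let F be the single-qubit stabilizer octahedron. The resource weight W_F(ρ) = max{λ ≤ 1 : ∃σ ∈ F, ρ ≥ λσ} equals: 1 if y ≤ 1−x; (√2 − (x+y))/(√2 − 1) if 1−x ≤ y ≤ (√2+1)(1−x); and (1 − (x²+y²))/(2(1−x)) if y > (√2+1)(1−x). -/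
open Matrix BigOperators
open scoped ComplexOrder

noncomputable section

def sigmaX : Matrix (Fin 2) (Fin 2) ℂ := !![0, 1; 1, 0]
def sigmaY : Matrix (Fin 2) (Fin 2) ℂ := !![0, -Complex.I; Complex.I, 0]
def sigmaZ : Matrix (Fin 2) (Fin 2) ℂ := !![1, 0; 0, -1]

/-- A single-qubit stabilizer state: a Bloch vector in the octahedron
`|a| + |b| + |c| ≤ 1`. -/
def IsStab1 (σ : Matrix (Fin 2) (Fin 2) ℂ) : Prop :=
  ∃ a b c : ℝ, |a| + |b| + |c| ≤ 1 ∧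
    σ = (1/2 : ℂ) • (1 + (a : ℂ) • sigmaX + (b : ℂ) • sigmaY + (c : ℂ) • sigmaZ)

/-- Resource weight `W_F(ρ) = max{λ ≤ 1 : ∃ σ ∈ F, ρ ≥ λσ}`. -/
def Wt1 (ρ : Matrix (Fin 2) (Fin 2) ℂ) : ℝ :=
  sSup {l : ℝ | l ≤ 1 ∧ ∃ s, IsStab1 s ∧ (ρ - (l : ℂ) • s).PosSemidef}

/-- PSD criterion for a 2×2 hermitian-shaped matrix. -/
lemma psd2 (p q : ℝ) (z : ℂ) :
    (!![(p:ℂ), star z; z, (q:ℂ)]).PosSemidef ↔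
      0 ≤ p ∧ 0 ≤ q ∧ Complex.normSq z ≤ p * q := by
  have hzz : z * (starRingEnd ℂ) z = (Complex.normSq z : ℂ) := Complex.mul_conj z
  rw [Matrix.posSemidef_iff_dotProduct_mulVec]
  constructor
  · rintro ⟨hherm, hform⟩
    have h0 := hform ![1, 0]
    have h1 := hform ![0, 1]
    simp [Matrix.mulVec, dotProduct, Fin.sum_univ_two] at h0 h1
    refine ⟨h0, h1, ?_⟩
    rcases eq_or_lt_of_le (add_nonneg h0 h1) with hpq | hpq
    · -- p + q = 0, so p = q = 0
      have hp : p = 0 := by linarith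
      have hq : q = 0 := by linarith
      have h2 := hform ![1, -z]
      simp [Matrix.mulVec, dotProduct, Fin.sum_univ_two, hp, hq] at h2
      have e : (starRingEnd ℂ) z * z = (Complex.normSq z : ℂ) := by
        rw [mul_comm]; exact hzz
      rw [e, show -((Complex.normSq z : ℝ):ℂ) = ((-(Complex.normSq z):ℝ):ℂ) by push_cast; ring,
        Complex.real_le_real] at h2
      nlinarith [Complex.normSq_nonneg z]
    · have h2 := hform ![(q:ℂ), -z]
      have h3 := hform ![-(star z), (p:ℂ)]
      simp [Matrix.mulVec, dotProduct, Fin.sum_univ_two] at h2 h3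
      have h2' : (0:ℝ) ≤ q * (p*q - Complex.normSq z) := by
        rw [← Complex.zero_le_real]
        push_cast
        calc (0:ℂ) = (starRingEnd ℂ) z * (z * ↑q + -(↑q * z)) := by ring
        _ ≤ _ := h2
        _ = _ := by rw [← hzz]; ring
      have h3' : (0:ℝ) ≤ p * (p*q - Complex.normSq z) := by
        rw [← Complex.zero_le_real]
        push_cast
        calc (0:ℂ) = z * (-(↑p * (starRingEnd ℂ) z) + (starRingEnd ℂ) z * ↑p) := by ring
        _ ≤ _ := h3
        _ = _ := by rw [← hzz]; ring
      nlinarith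
  · rintro ⟨hp, hq, hzpq⟩
    constructor
    · ext i j
      fin_cases i <;> fin_cases j <;>
        simp [Matrix.conjTranspose_apply]
    · intro x
      have key : star x ⬝ᵥ (!![(p:ℂ), star z; z, (q:ℂ)]) *ᵥ x =
          ((p * Complex.normSq (x 0) + q * Complex.normSq (x 1)
            + 2 * (z * x 0 * star (x 1)).re : ℝ) : ℂ) := by
        simp [Matrix.mulVec, dotProduct, Fin.sum_univ_two, Complex.ext_iff,
          Complex.normSq_apply]
        constructor <;> ring
      rw [key, Complex.zero_le_real]
      have hre : ((z * x 0 * star (x 1)).re)^2 ≤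
          Complex.normSq z * Complex.normSq (x 0) * Complex.normSq (x 1) := by
        have := Complex.abs_re_le_norm (z * x 0 * star (x 1))
        have habs : ‖z * x 0 * star (x 1)‖ ^ 2
            = Complex.normSq z * Complex.normSq (x 0) * Complex.normSq (x 1) := by
          rw [Complex.sq_norm]
          simp [Complex.normSq_mul]
        nlinarith [abs_nonneg (z * x 0 * star (x 1)).re,
          norm_nonneg (z * x 0 * star (x 1)), sq_abs ((z * x 0 * star (x 1)).re)]
      set A := Complex.normSq (x 0)
      set B := Complex.normSq (x 1)
      set R := (z * x 0 * star (x 1)).re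
      have hA : 0 ≤ A := Complex.normSq_nonneg _
      have hB : 0 ≤ B := Complex.normSq_nonneg _
      have hN : 0 ≤ Complex.normSq z := Complex.normSq_nonneg _
      rcases le_or_gt 0 R with hR | hR
      · nlinarith [mul_nonneg hp hA, mul_nonneg hq hB]
      · have hS2 : 4*R^2 ≤ (p*A + q*B)^2 := by
          nlinarith [hre, sq_nonneg (p*A - q*B),
            mul_nonneg (mul_nonneg hA hB) (sub_nonneg.2 hzpq)]
        have hS : 0 ≤ p*A + q*B := by positivity
        nlinarith [hS2, hS]

/-- PSD criterion for a Bloch-form matrix. -/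
lemma bloch_psd (t u v w : ℝ) :
    (!![((t+w:ℝ):ℂ), ((u:ℝ):ℂ) - ((v:ℝ):ℂ)*Complex.I;
        ((u:ℝ):ℂ) + ((v:ℝ):ℂ)*Complex.I, ((t-w:ℝ):ℂ)]).PosSemidef ↔
      0 ≤ t ∧ u^2 + v^2 + w^2 ≤ t^2 := by
  have hst : star (((u:ℝ):ℂ) + ((v:ℝ):ℂ)*Complex.I) = ((u:ℝ):ℂ) - ((v:ℝ):ℂ)*Complex.I := by
    simp [Complex.ext_iff]
  rw [show (!![((t+w:ℝ):ℂ), ((u:ℝ):ℂ) - ((v:ℝ):ℂ)*Complex.I;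
        ((u:ℝ):ℂ) + ((v:ℝ):ℂ)*Complex.I, ((t-w:ℝ):ℂ)])
      = !![((t+w:ℝ):ℂ), star (((u:ℝ):ℂ) + ((v:ℝ):ℂ)*Complex.I);
        ((u:ℝ):ℂ) + ((v:ℝ):ℂ)*Complex.I, ((t-w:ℝ):ℂ)] by rw [hst], psd2]
  have hn : Complex.normSq (((u:ℝ):ℂ) + ((v:ℝ):ℂ)*Complex.I) = u^2 + v^2 := by
    simp [Complex.normSq_apply]; ring
  rw [hn]
  constructor
  · rintro ⟨h1, h2, h3⟩
    exact ⟨by linarith, by nlinarith⟩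
  · rintro ⟨h1, h2⟩
    refine ⟨by nlinarith [sq_nonneg u, sq_nonneg v], by nlinarith [sq_nonneg u, sq_nonneg v],
      by nlinarith⟩

lemma matrix_eq (x y l a b c : ℝ) :
    (1/2 : ℂ) • (1 + (x : ℂ) • sigmaX + (y : ℂ) • sigmaY)
      - (l : ℂ) • ((1/2 : ℂ) • (1 + (a : ℂ) • sigmaX + (b : ℂ) • sigmaY + (c : ℂ) • sigmaZ))
    = !![((((1-l)/2) + (-(l*c)/2) : ℝ):ℂ),
          (((x-l*a)/2 : ℝ):ℂ) - (((y-l*b)/2 : ℝ):ℂ)*Complex.I;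
          (((x-l*a)/2 : ℝ):ℂ) + (((y-l*b)/2 : ℝ):ℂ)*Complex.I,
          ((((1-l)/2) - (-(l*c)/2) : ℝ):ℂ)] := by
  ext i j
  fin_cases i <;> fin_cases j <;>
    simp [sigmaX, sigmaY, sigmaZ, Matrix.one_fin_two, Complex.ext_iff] <;> ring_nf <;> simp

lemma mem_iff_s10 (x y l : ℝ) :
    (l ≤ 1 ∧ ∃ s, IsStab1 s ∧
      ((1/2 : ℂ) • (1 + (x : ℂ) • sigmaX + (y : ℂ) • sigmaY) - (l : ℂ) • s).PosSemidef)
    ↔ (l ≤ 1 ∧ ∃ a b c : ℝ, |a| + |b| + |c| ≤ 1 ∧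
        (x - l*a)^2 + (y - l*b)^2 + (l*c)^2 ≤ (1-l)^2) := by
  constructor
  · rintro ⟨hl, s, ⟨a, b, c, habc, rfl⟩, hpsd⟩
    rw [matrix_eq, bloch_psd] at hpsd
    refine ⟨hl, a, b, c, habc, ?_⟩
    obtain ⟨-, h2⟩ := hpsd
    nlinarith [h2]
  · rintro ⟨hl, a, b, c, habc, hcond⟩
    refine ⟨hl, _, ⟨a, b, c, habc, rfl⟩, ?_⟩
    rw [matrix_eq, bloch_psd]
    exact ⟨by linarith, by nlinarith⟩

/-- Edge upper bound: any feasible `l` satisfies `l(√2−1) ≤ √2−(x+y)`. -/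
lemma edge_ub (x y l a b c : ℝ) (hy0 : 0 ≤ y) (hyx : y ≤ x) (hball : x^2 + y^2 ≤ 1)
    (hl1 : l ≤ 1) (habc : |a| + |b| + |c| ≤ 1)
    (hcond : (x - l*a)^2 + (y - l*b)^2 + (l*c)^2 ≤ (1-l)^2) :
    l * (Real.sqrt 2 - 1) ≤ Real.sqrt 2 - (x + y) := by
  set r := Real.sqrt 2 with hr
  have hr2 : r^2 = 2 := Real.sq_sqrt (by norm_num)
  have hr0 : 0 ≤ r := Real.sqrt_nonneg 2
  have hr1 : 1 < r := by nlinarith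
  have hx0 : 0 ≤ x := le_trans hy0 hyx
  have hxyr : x + y ≤ r := by nlinarith [sq_nonneg (x - y)]
  rcases le_or_gt l 0 with hl0 | hl0
  · nlinarith
  · have hab : l*a + l*b ≤ l := by
      nlinarith [le_abs_self a, le_abs_self b, abs_nonneg c]
    have hst : x + y - l ≤ (x - l*a) + (y - l*b) := by linarith
    have hsq : ((x - l*a) + (y - l*b))^2 ≤ 2*(1-l)^2 := by
      nlinarith [sq_nonneg ((x - l*a) - (y - l*b)), hcond, sq_nonneg (l*c)]
    have h1l : (0:ℝ) ≤ 1 - l := by linarith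
    have hkey : x + y - l ≤ r*(1-l) := by
      rcases le_or_gt (x + y - l) 0 with h | h
      · nlinarith [mul_nonneg hr0 h1l]
      · nlinarith [hsq, hst, hr2, mul_nonneg hr0 h1l]
    nlinarith [hkey]

set_option maxHeartbeats 2000000 in
/-- For `ρ = (1/2)(I + xX + yY)` with `0 ≤ y ≤ x`, `x² + y² ≤ 1`, the
stabilizer weight is `1` if `y ≤ 1−x`; `(√2 − (x+y))/(√2 − 1)` if
`1−x ≤ y ≤ (√2+1)(1−x)`; and `(1 − (x²+y²))/(2(1−x))` if `y > (√2+1)(1−x)`. -/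
theorem weight_of_rotated_state (x y : ℝ)
    (hy0 : 0 ≤ y) (hyx : y ≤ x) (hball : x^2 + y^2 ≤ 1) :
    ((y ≤ 1 - x) →
        Wt1 ((1/2 : ℂ) • (1 + (x : ℂ) • sigmaX + (y : ℂ) • sigmaY)) = 1)
    ∧ ((1 - x ≤ y ∧ y ≤ (Real.sqrt 2 + 1) * (1 - x)) →
        Wt1 ((1/2 : ℂ) • (1 + (x : ℂ) • sigmaX + (y : ℂ) • sigmaY))
          = (Real.sqrt 2 - (x + y)) / (Real.sqrt 2 - 1))
    ∧ (((Real.sqrt 2 + 1) * (1 - x) < y) →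
        Wt1 ((1/2 : ℂ) • (1 + (x : ℂ) • sigmaX + (y : ℂ) • sigmaY))
          = (1 - (x^2 + y^2)) / (2 * (1 - x))) := by
  have hx0 : 0 ≤ x := le_trans hy0 hyx
  set r := Real.sqrt 2 with hr
  have hr2 : r^2 = 2 := Real.sq_sqrt (by norm_num)
  have hr0 : 0 ≤ r := Real.sqrt_nonneg 2
  have hr1 : 1 < r := by nlinarith
  have hr2' : r < 2 := by nlinarith
  have hxyr : x + y ≤ r := by nlinarith [sq_nonneg (x - y)]
  have hWset : Wt1 ((1/2 : ℂ) • (1 + (x : ℂ) • sigmaX + (y : ℂ) • sigmaY))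
      = sSup {l : ℝ | l ≤ 1 ∧ ∃ a b c : ℝ, |a| + |b| + |c| ≤ 1 ∧
          (x - l*a)^2 + (y - l*b)^2 + (l*c)^2 ≤ (1-l)^2} := by
    rw [Wt1]
    congr 1
    ext l
    exact mem_iff_s10 x y l
  refine ⟨?_, ?_, ?_⟩
  · -- Case 1 : y ≤ 1 - x
    intro h1
    rw [hWset]
    apply IsGreatest.csSup_eq
    constructor
    · refine ⟨le_refl 1, x, y, 0, ?_, ?_⟩
      · rw [abs_of_nonneg hx0, abs_of_nonneg hy0, abs_zero]
        linarith
      · norm_num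
    · intro l hl
      exact hl.1
  · -- Case 2 : 1 - x ≤ y ≤ (√2+1)(1-x)
    rintro ⟨h1, h2⟩
    rw [hWset]
    apply IsGreatest.csSup_eq
    have hL0 : 0 ≤ (r - (x + y)) / (r - 1) := div_nonneg (by linarith) (by linarith)
    have hL1 : (r - (x + y)) / (r - 1) ≤ 1 := by
      rw [div_le_one (by linarith)]
      linarith
    constructor
    · rcases eq_or_lt_of_le hL0 with hLz | hLz
      · refine ⟨hL1, 0, 0, 0, by norm_num, ?_⟩
        rw [← hLz]
        norm_num
        nlinarith
      · set L := (r - (x + y)) / (r - 1) with hLdef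
        have hLne : L ≠ 0 := ne_of_gt hLz
        have hL' : L * (r - 1) = r - (x + y) := by
          rw [hLdef]
          exact div_mul_cancel₀ _ (ne_of_gt (by linarith : (0:ℝ) < r - 1))
        have hLxy : x - y ≤ L := by
          have hkey : (r - 1)*(x - y) ≤ r - (x + y) := by
            nlinarith [mul_nonneg (by linarith : (0:ℝ) ≤ 2 - r)
              (by linarith : (0:ℝ) ≤ (r+1)*(1-x) - y)]
          rw [hLdef, le_div_iff₀ (by linarith)]
          linarith
        refine ⟨hL1, (x - y + L)/(2*L), (y - x + L)/(2*L), 0, ?_, ?_⟩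
        · have ha : 0 ≤ (x - y + L)/(2*L) := div_nonneg (by linarith) (by linarith)
          have hb : 0 ≤ (y - x + L)/(2*L) := div_nonneg (by linarith) (by linarith)
          have hsum : (x - y + L)/(2*L) + (y - x + L)/(2*L) = 1 := by
            field_simp
            ring
          rw [abs_of_nonneg ha, abs_of_nonneg hb, abs_zero, add_zero, hsum]
        · have hxa : x - L*((x - y + L)/(2*L)) = (x + y - L)/2 := by
            field_simp; ring
          have hyb : y - L*((y - x + L)/(2*L)) = (x + y - L)/2 := by
            field_simp; ring
          have hxyL : x + y - L = r*(1 - L) := by nlinarith [hL']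
          rw [hxa, hyb, hxyL]
          have : (r*(1-L)/2)^2 + (r*(1-L)/2)^2 + (L*0)^2 = (1-L)^2 := by
            linear_combination ((1-L)^2/2) * hr2
          linarith [this]
    · rintro l ⟨hl1, a, b, c, habc, hcond⟩
      have := edge_ub x y l a b c hy0 hyx hball hl1 habc hcond
      rw [le_div_iff₀ (by linarith)]
      linarith
  · -- Case 3 : (√2+1)(1-x) < y
    intro h3
    rw [hWset]
    apply IsGreatest.csSup_eq
    set L := (1 - (x^2+y^2)) / (2*(1-x)) with hLdef
    have hxle : x ≤ 1 := by nlinarith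
    have hx1 : x < 1 := by
      rcases lt_or_eq_of_le hxle with h | h
      · exact h
      · exfalso
        have hy' : y = 0 := by nlinarith
        rw [hy', ← h] at h3
        nlinarith
    have hden : (0:ℝ) < 2*(1-x) := by linarith
    have hLval : L * (2*(1-x)) = 1 - (x^2+y^2) := by
      rw [hLdef]
      exact div_mul_cancel₀ _ (ne_of_gt hden)
    have hL1 : L ≤ 1 := by
      rw [hLdef, div_le_one hden]
      nlinarith [sq_nonneg (1-x)]
    constructor
    · refine ⟨hL1, 1, 0, 0, by norm_num, ?_⟩
      exact le_of_eq (by linear_combination hLval)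
    · rintro l ⟨hl1, a, b, c, habc, hcond⟩
      rcases le_or_gt l 0 with hl0 | hl0
      · have : 0 ≤ L := by
          rw [hLdef]
          exact div_nonneg (by linarith) (by linarith)
        linarith
      · have hedge := edge_ub x y l a b c hy0 hyx hball hl1 habc hcond
        have h2r : (0:ℝ) < 2 - r := by linarith
        have hmul := mul_lt_mul_of_pos_left h3 h2r
        have e2 : (2-r)*((r+1)*(1-x)) = r*(1-x) + (2-r^2)*(1-x) := by ring
        rw [e2, hr2] at hmul
        have hA : r*(1-x) < (2-r)*y := by linarith
        have hlt : l*(r-1) < (x-y)*(r-1) := by linarith [hedge, hA]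
        have hlxy : l ≤ x - y :=
          le_of_lt ((mul_lt_mul_iff_left₀ (by linarith : (0:ℝ) < r-1)).mp hlt)
        have habs1 : |a| ≤ 1 := by linarith [abs_nonneg b, abs_nonneg c]
        have hbbs1 : |b| ≤ 1 := by linarith [abs_nonneg a, abs_nonneg c]
        have hcbs1 : |c| ≤ 1 := by linarith [abs_nonneg a, abs_nonneg b]
        have hA2 : a^2 ≤ |a| := by
          linarith [mul_nonneg (abs_nonneg a) (sub_nonneg.2 habs1), sq_abs a]
        have hB2 : b^2 ≤ |b| := by
          linarith [mul_nonneg (abs_nonneg b) (sub_nonneg.2 hbbs1), sq_abs b]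
        have hC2 : c^2 ≤ |c| := by
          linarith [mul_nonneg (abs_nonneg c) (sub_nonneg.2 hcbs1), sq_abs c]
        have hs : a^2 + b^2 + c^2 ≤ 1 := by linarith
        have hab1 : a + b ≤ 1 := by
          linarith [le_abs_self a, le_abs_self b, abs_nonneg c]
        have ha1 : a ≤ 1 := by
          linarith [le_abs_self a, abs_nonneg b, abs_nonneg c]
        have h1a : 0 ≤ 1 - 2*a + (a^2+b^2+c^2) := by
          nlinarith [sq_nonneg (1-a), sq_nonneg b, sq_nonneg c]
        have hg : 0 ≤ (x-y)*(1 - 2*a + (a^2+b^2+c^2)) + 2*y*(1 - a - b) :=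
          add_nonneg (mul_nonneg (by linarith) h1a)
            (mul_nonneg (by linarith) (by linarith))
        have hB : 0 ≤ 2*x*(1-a) - 2*y*b + l*(a^2+b^2+c^2-1) := by
          nlinarith [hg, mul_nonneg (by linarith : (0:ℝ) ≤ (x-y) - l)
            (by linarith : (0:ℝ) ≤ 1 - (a^2+b^2+c^2))]
        have hvert : (x-l)^2 + y^2 ≤ (1-l)^2 := by
          nlinarith [hcond, mul_nonneg (le_of_lt hl0) hB]
        rw [hLdef, le_div_iff₀ hden]
        nlinarith [hvert]
end
end
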